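/- arXiv:1805.03332 — 3 statements merged into one kernel-verified Lean document; each statement's English description precedes it below -/
import Mathlib

section
/- There exists a constant c > 0 such that for all ε with 0 < ε ≤ 1/2 and all φ with 0 ≤ φ ≤ ε^{3/4}, the inequality |∫₀^φ dx/√(sinh²(x/2) + ε²) − 2·arcsinh(φ/(2ε))| ≤ c·ε^{3/4} holds. -/
open Real

lemma sinh_le_cubic {y : ℝ} (h0 : 0 ≤ y) (h1 : y ≤ 1) :
    Real.sinh y ≤ y + y ^ 3 := by
  have hy : |y| ≤ 1 := by rwa [abs_of_nonneg h0]
  have hny : |(-y)| ≤ 1 := by rwa [abs_neg]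
  have h4 : (0:ℕ) < 4 := by norm_num
  have hb1 := Real.exp_bound hy h4
  have hb2 := Real.exp_bound hny h4
  simp only [Finset.sum_range_succ, Finset.sum_range_zero] at hb1 hb2
  norm_num [Nat.factorial, abs_of_nonneg h0] at hb1 hb2
  rw [Real.sinh_eq]
  rw [abs_sub_le_iff] at hb1 hb2
  obtain ⟨hb1a, hb1b⟩ := hb1
  obtain ⟨hb2a, hb2b⟩ := hb2
  nlinarith [pow_le_pow_left₀ h0 h1 4, pow_le_pow_left₀ h0 h1 3]

lemma pointwise_mono {ε x : ℝ} (hε : 0 < ε) (hx0 : 0 ≤ x) :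
    1 / Real.sqrt (Real.sinh (x / 2) ^ 2 + ε ^ 2)
      ≤ 1 / Real.sqrt (x ^ 2 / 4 + ε ^ 2) := by
  have hx2 : 0 ≤ x / 2 := by linarith
  have hs1 : x / 2 ≤ Real.sinh (x / 2) := Real.self_le_sinh_iff.2 hx2
  have hbpos : (0:ℝ) < x ^ 2 / 4 + ε ^ 2 := by positivity
  apply one_div_le_one_div_of_le (Real.sqrt_pos.2 hbpos)
  apply Real.sqrt_le_sqrt
  nlinarith [mul_le_mul hs1 hs1 hx2 (hx2.trans hs1)]

lemma pointwise_diff {ε x : ℝ} (hε : 0 < ε) (hx0 : 0 ≤ x) (hx1 : x ≤ 1) :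
    1 / Real.sqrt (x ^ 2 / 4 + ε ^ 2)
      - 1 / Real.sqrt (Real.sinh (x / 2) ^ 2 + ε ^ 2)
      ≤ 3 / (2 * ε) * x ^ 2 := by
  have hx2 : 0 ≤ x / 2 := by linarith
  have hs1 : x / 2 ≤ Real.sinh (x / 2) := Real.self_le_sinh_iff.2 hx2
  have hs2 : Real.sinh (x / 2) ≤ x / 2 + (x / 2) ^ 3 :=
    sinh_le_cubic hx2 (by linarith)
  have hapos : (0:ℝ) < Real.sinh (x / 2) ^ 2 + ε ^ 2 := by positivity
  have hbpos : (0:ℝ) < x ^ 2 / 4 + ε ^ 2 := by positivity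
  have hab : x ^ 2 / 4 + ε ^ 2 ≤ Real.sinh (x / 2) ^ 2 + ε ^ 2 := by
    nlinarith [mul_le_mul hs1 hs1 hx2 (hx2.trans hs1)]
  set sa := Real.sqrt (Real.sinh (x / 2) ^ 2 + ε ^ 2) with hsa
  set sb := Real.sqrt (x ^ 2 / 4 + ε ^ 2) with hsb
  have hsa2 : sa ^ 2 = Real.sinh (x / 2) ^ 2 + ε ^ 2 := Real.sq_sqrt hapos.le
  have hsb2 : sb ^ 2 = x ^ 2 / 4 + ε ^ 2 := Real.sq_sqrt hbpos.le
  have hsapos : 0 < sa := Real.sqrt_pos.2 hapos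
  have hsbpos : 0 < sb := Real.sqrt_pos.2 hbpos
  have hsab : sb ≤ sa := Real.sqrt_le_sqrt hab
  have hsbε : ε ≤ sb := by
    rw [hsb]
    calc ε = Real.sqrt (ε ^ 2) := (Real.sqrt_sq hε.le).symm
      _ ≤ _ := Real.sqrt_le_sqrt (by nlinarith [sq_nonneg x])
  have hsbx : x / 2 ≤ sb := by
    rw [hsb]
    calc x / 2 = Real.sqrt ((x / 2) ^ 2) := (Real.sqrt_sq hx2).symm
      _ ≤ _ := Real.sqrt_le_sqrt (by nlinarith [sq_nonneg ε])
  have hid : 1 / sb - 1 / sa = (sa ^ 2 - sb ^ 2) / (sa * sb * (sa + sb)) := by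
    field_simp
    ring
  rw [hid, hsa2, hsb2, div_le_iff₀ (by positivity)]
  have hanb : (Real.sinh (x / 2) ^ 2 + ε ^ 2) - (x ^ 2 / 4 + ε ^ 2) ≤ 3 / 4 * x ^ 4 := by
    nlinarith [sq_nonneg x, pow_le_pow_left₀ hx0 hx1 2]
  have hD : ε * (x / 2) * x ≤ sa * sb * (sa + sb) := by
    have h1 : ε * (x / 2) ≤ sa * sb :=
      mul_le_mul (hsbε.trans hsab) hsbx hx2 hsapos.le
    have h2 : x ≤ sa + sb := by linarith
    exact mul_le_mul h1 h2 hx0 (by positivity)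
  calc (Real.sinh (x / 2) ^ 2 + ε ^ 2) - (x ^ 2 / 4 + ε ^ 2)
      ≤ 3 / 4 * x ^ 4 := hanb
    _ = 3 / (2 * ε) * x ^ 2 * (ε * (x / 2) * x) := by field_simp; ring
    _ ≤ 3 / (2 * ε) * x ^ 2 * (sa * sb * (sa + sb)) :=
        mul_le_mul_of_nonneg_left hD (by positivity)

/-- Inner-region approximation: there exists c > 0 such that for all
0 < ε ≤ 1/2 and 0 ≤ φ ≤ ε^{3/4},
|∫₀^φ dx/√(sinh²(x/2) + ε²) − 2·arcsinh(φ/(2ε))| ≤ c·ε^{3/4}. -/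
theorem stmt5 :
    ∃ c : ℝ, 0 < c ∧ ∀ ε : ℝ, 0 < ε → ε ≤ 1 / 2 →
      ∀ φ : ℝ, 0 ≤ φ → φ ≤ ε ^ ((3 : ℝ) / 4) →
        |(∫ x in (0 : ℝ)..φ, 1 / Real.sqrt (Real.sinh (x / 2) ^ 2 + ε ^ 2))
            - 2 * Real.arsinh (φ / (2 * ε))|
          ≤ c * ε ^ ((3 : ℝ) / 4) := by
  refine ⟨1, one_pos, fun ε hε hε2 φ hφ0 hφub => ?_⟩
  have hε1 : ε ≤ 1 := hε2.trans (by norm_num)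
  have hφ1 : φ ≤ 1 := hφub.trans (Real.rpow_le_one hε.le hε1 (by norm_num))
  -- continuity / integrability
  have haux : ∀ x : ℝ, (0:ℝ) < Real.sinh (x / 2) ^ 2 + ε ^ 2 := fun x => by positivity
  have haux2 : ∀ x : ℝ, (0:ℝ) < x ^ 2 / 4 + ε ^ 2 := fun x => by positivity
  have contf : Continuous (fun x : ℝ => 1 / Real.sqrt (Real.sinh (x / 2) ^ 2 + ε ^ 2)) := by
    apply continuous_const.div
    · exact (((Real.continuous_sinh.comp (continuous_id.div_const 2)).pow 2).add
        continuous_const).sqrt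
    · exact fun x => (Real.sqrt_pos.2 (haux x)).ne'
  have contg : Continuous (fun x : ℝ => 1 / Real.sqrt (x ^ 2 / 4 + ε ^ 2)) := by
    apply continuous_const.div
    · exact (((continuous_pow 2).div_const 4).add continuous_const).sqrt
    · exact fun x => (Real.sqrt_pos.2 (haux2 x)).ne'
  have hf_int : IntervalIntegrable (fun x : ℝ => 1 / Real.sqrt (Real.sinh (x / 2) ^ 2 + ε ^ 2))
      MeasureTheory.volume 0 φ := contf.intervalIntegrable _ _
  have hg_int : IntervalIntegrable (fun x : ℝ => 1 / Real.sqrt (x ^ 2 / 4 + ε ^ 2))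
      MeasureTheory.volume 0 φ := contg.intervalIntegrable _ _
  -- FTC for g
  have hsqrt_eq : ∀ x : ℝ, Real.sqrt (x ^ 2 / 4 + ε ^ 2) = ε * Real.sqrt (1 + (x / (2 * ε)) ^ 2) := by
    intro x
    rw [show x ^ 2 / 4 + ε ^ 2 = ε ^ 2 * (1 + (x / (2 * ε)) ^ 2) by field_simp; ring,
      Real.sqrt_mul (sq_nonneg ε), Real.sqrt_sq hε.le]
  have hderiv : ∀ x : ℝ, HasDerivAt (fun y => 2 * Real.arsinh (y / (2 * ε)))
      (1 / Real.sqrt (x ^ 2 / 4 + ε ^ 2)) x := by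
    intro x
    have h1 : HasDerivAt (fun y : ℝ => y / (2 * ε)) (1 / (2 * ε)) x := by
      simpa using (hasDerivAt_id x).div_const (2 * ε)
    have h2 := (Real.hasDerivAt_arsinh (x / (2 * ε))).comp x h1
    have h3 := h2.const_mul 2
    refine h3.congr_deriv ?_
    symm
    rw [hsqrt_eq x, one_div, mul_inv]
    have hs : Real.sqrt (1 + (x / (2 * ε)) ^ 2) ≠ 0 :=
      (Real.sqrt_pos.2 (by positivity)).ne'
    field_simp
  have hFTC : (∫ x in (0:ℝ)..φ, 1 / Real.sqrt (x ^ 2 / 4 + ε ^ 2))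
      = 2 * Real.arsinh (φ / (2 * ε)) := by
    rw [intervalIntegral.integral_eq_sub_of_hasDerivAt (fun x _ => hderiv x) hg_int]
    simp
  -- integral comparison
  have hfg : (∫ x in (0:ℝ)..φ, 1 / Real.sqrt (Real.sinh (x / 2) ^ 2 + ε ^ 2))
      ≤ ∫ x in (0:ℝ)..φ, 1 / Real.sqrt (x ^ 2 / 4 + ε ^ 2) :=
    intervalIntegral.integral_mono_on hφ0 hf_int hg_int
      (fun x hx => pointwise_mono hε hx.1)
  have hh_int : IntervalIntegrable (fun x : ℝ => 3 / (2 * ε) * x ^ 2)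
      MeasureTheory.volume 0 φ :=
    (continuous_const.mul (continuous_pow 2)).intervalIntegrable _ _
  have hdiff : (∫ x in (0:ℝ)..φ, 1 / Real.sqrt (x ^ 2 / 4 + ε ^ 2))
      - (∫ x in (0:ℝ)..φ, 1 / Real.sqrt (Real.sinh (x / 2) ^ 2 + ε ^ 2))
      ≤ φ ^ 3 / (2 * ε) := by
    rw [← intervalIntegral.integral_sub hg_int hf_int]
    have h2 : (∫ x in (0:ℝ)..φ,
          (1 / Real.sqrt (x ^ 2 / 4 + ε ^ 2) - 1 / Real.sqrt (Real.sinh (x / 2) ^ 2 + ε ^ 2)))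
        ≤ ∫ x in (0:ℝ)..φ, 3 / (2 * ε) * x ^ 2 :=
      intervalIntegral.integral_mono_on hφ0 (hg_int.sub hf_int) hh_int
        (fun x hx => pointwise_diff hε hx.1 (hx.2.trans hφ1))
    have h3 : (∫ x in (0:ℝ)..φ, 3 / (2 * ε) * x ^ 2) = φ ^ 3 / (2 * ε) := by
      rw [intervalIntegral.integral_const_mul, integral_pow]
      field_simp
      ring
    linarith
  -- final numeric bound
  have hfinal : φ ^ 3 / (2 * ε) ≤ ε ^ ((3:ℝ)/4) := by
    have h1 : φ ^ 3 ≤ (ε ^ ((3:ℝ)/4)) ^ 3 := pow_le_pow_left₀ hφ0 hφub 3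
    have h2 : (ε ^ ((3:ℝ)/4)) ^ (3:ℕ) = ε ^ ((9:ℝ)/4) := by
      rw [← Real.rpow_natCast (ε ^ ((3:ℝ)/4)) 3, ← Real.rpow_mul hε.le]
      norm_num
    have h3 : ε ^ ((9:ℝ)/4) = ε * (ε ^ ((1:ℝ)/2) * ε ^ ((3:ℝ)/4)) := by
      rw [show (9:ℝ)/4 = 1 + (1/2 + 3/4) by norm_num, Real.rpow_add hε, Real.rpow_one,
        Real.rpow_add hε]
    have h4 : ε ^ ((1:ℝ)/2) ≤ 1 := Real.rpow_le_one hε.le hε1 (by norm_num)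
    have h5 : (0:ℝ) ≤ ε ^ ((3:ℝ)/4) := Real.rpow_nonneg hε.le _
    rw [div_le_iff₀ (by positivity)]
    calc φ ^ 3 ≤ ε ^ ((9:ℝ)/4) := by rw [← h2]; exact h1
      _ = ε * (ε ^ ((1:ℝ)/2) * ε ^ ((3:ℝ)/4)) := h3
      _ ≤ ε * (1 * ε ^ ((3:ℝ)/4)) :=
          mul_le_mul_of_nonneg_left (mul_le_mul_of_nonneg_right h4 h5) hε.le
      _ ≤ ε ^ ((3:ℝ)/4) * (2 * ε) := by rw [one_mul]; nlinarith
  -- conclude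
  rw [← hFTC, one_mul]
  rw [abs_sub_comm, abs_of_nonneg (by linarith)]
  linarith
end

section
/- There exists a constant c > 0 such that for all ε with 0 < ε ≤ 1/2 and all φ with ε^{3/4} ≤ φ ≤ 10, the inequality |∫_{ε^{3/4}}^φ dx/√(sinh²(x/2) + ε²) − 4·(arccoth(e^{ε^{3/4}/2}) − arccoth(e^{φ/2}))| ≤ c·√ε holds. -/
open Real

/-- arccoth(y) = (1/2)·log((y+1)/(y−1)) for y > 1. -/
noncomputable def arccoth (y : ℝ) : ℝ := (1 / 2) * Real.log ((y + 1) / (y - 1))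

lemma arccoth_deriv (x : ℝ) (hx : 0 < x) :
    HasDerivAt (fun y => -4 * arccoth (Real.exp (y / 2))) (1 / Real.sinh (x / 2)) x := by
  have hu : 1 < Real.exp (x / 2) := by
    rw [show (1:ℝ) = Real.exp 0 by simp]
    exact Real.exp_lt_exp.mpr (by linarith)
  set u := Real.exp (x / 2) with hudef
  have hu0 : (0:ℝ) < u := Real.exp_pos _
  have h1 : HasDerivAt (fun y : ℝ => Real.exp (y / 2)) (u * (1 / 2)) x := by
    have := ((hasDerivAt_id x).div_const 2).exp
    simpa using this
  have h2 : HasDerivAt (fun y : ℝ => Real.log (Real.exp (y / 2) + 1))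
      ((u * (1 / 2)) / (u + 1)) x := (h1.add_const 1).log (by positivity)
  have h3 : HasDerivAt (fun y : ℝ => Real.log (Real.exp (y / 2) - 1))
      ((u * (1 / 2)) / (u - 1)) x := (h1.sub_const 1).log (by nlinarith)
  have h4 : HasDerivAt (fun y : ℝ => (-2 : ℝ) * (Real.log (Real.exp (y / 2) + 1)
      - Real.log (Real.exp (y / 2) - 1)))
      ((-2) * ((u * (1 / 2)) / (u + 1) - (u * (1 / 2)) / (u - 1))) x :=
    (h2.sub h3).const_mul (-2)
  have hsinh : Real.sinh (x / 2) = (u - u⁻¹) / 2 := by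
    rw [Real.sinh_eq, hudef, Real.exp_neg]
  have hsinh_pos : 0 < Real.sinh (x / 2) := Real.sinh_pos_iff.mpr (by linarith)
  have heqd : (-2 : ℝ) * ((u * (1 / 2)) / (u + 1) - (u * (1 / 2)) / (u - 1))
      = 1 / Real.sinh (x / 2) := by
    rw [hsinh]
    have h5 : u - 1 ≠ 0 := by nlinarith
    have h6 : u + 1 ≠ 0 := by positivity
    have h7 : u - u⁻¹ ≠ 0 := by
      have : 0 < u - u⁻¹ := by
        have : u⁻¹ < 1 := by rw [inv_lt_one_iff₀]; right; exact hu
        linarith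
      linarith
    have h8 : u ^ 2 - 1 ≠ 0 := by nlinarith
    have h9 : (-1 : ℝ) + u ^ 2 ≠ 0 := by nlinarith
    field_simp
    ring
  rw [← heqd]
  apply h4.congr_of_eventuallyEq
  have hopen : Set.Ioi (0:ℝ) ∈ nhds x := Ioi_mem_nhds hx
  filter_upwards [hopen] with y hy
  have huy : 1 < Real.exp (y / 2) := by
    rw [show (1:ℝ) = Real.exp 0 by simp]
    exact Real.exp_lt_exp.mpr (by simp at hy ⊢; linarith)
  unfold arccoth
  rw [Real.log_div (by positivity) (by nlinarith)]
  ring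

lemma pointwise_bound (s e : ℝ) (hs : 0 < s) (he : 0 ≤ e) :
    |1 / Real.sqrt (s ^ 2 + e ^ 2) - 1 / s| ≤ e ^ 2 / (2 * s ^ 3) := by
  have hsq : Real.sqrt (s ^ 2 + e ^ 2) ≥ s := by
    rw [ge_iff_le, show s ≤ Real.sqrt (s ^ 2 + e ^ 2) ↔ s ^ 2 ≤ s ^ 2 + e ^ 2 from
      Real.le_sqrt hs.le (by positivity)]
    nlinarith
  have hsqpos : 0 < Real.sqrt (s ^ 2 + e ^ 2) := lt_of_lt_of_le hs hsq
  have hupper : Real.sqrt (s ^ 2 + e ^ 2) ≤ s + e ^ 2 / (2 * s) := by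
    rw [show s + e ^ 2 / (2 * s) = Real.sqrt ((s + e ^ 2 / (2 * s)) ^ 2) by
      rw [Real.sqrt_sq (by positivity)]]
    apply Real.sqrt_le_sqrt
    have ht : 2 * s * (e ^ 2 / (2 * s)) = e ^ 2 := by field_simp
    nlinarith [sq_nonneg (e ^ 2 / (2 * s)), ht]
  rw [abs_sub_comm, abs_of_nonneg]
  · have key : 1 / s - 1 / Real.sqrt (s ^ 2 + e ^ 2) ≤ 1 / s - 1 / (s + e ^ 2 / (2 * s)) := by
      have : 1 / (s + e ^ 2 / (2 * s)) ≤ 1 / Real.sqrt (s ^ 2 + e ^ 2) :=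
        one_div_le_one_div_of_le hsqpos hupper
      linarith
    have key2 : 1 / s - 1 / (s + e ^ 2 / (2 * s)) ≤ e ^ 2 / (2 * s ^ 3) := by
      rw [div_sub_div _ _ (ne_of_gt hs) (by positivity),
        div_le_div_iff₀ (by positivity) (by positivity)]
      have ht : 2 * s * (e ^ 2 / (2 * s)) = e ^ 2 := by field_simp
      nlinarith [pow_pos hs 3, sq_nonneg (e ^ 2), ht, pow_pos hs 2]
    linarith
  · have : 1 / Real.sqrt (s ^ 2 + e ^ 2) ≤ 1 / s := one_div_le_one_div_of_le hs hsq
    linarith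

/-- Outer-region approximation: there exists c > 0 such that for all
0 < ε ≤ 1/2 and ε^{3/4} ≤ φ ≤ 10,
|∫_{ε^{3/4}}^φ dx/√(sinh²(x/2) + ε²)
  − 4·(arccoth(e^{ε^{3/4}/2}) − arccoth(e^{φ/2}))| ≤ c·√ε. -/
theorem stmt6 :
    ∃ c : ℝ, 0 < c ∧ ∀ ε : ℝ, 0 < ε → ε ≤ 1 / 2 →
      ∀ φ : ℝ, ε ^ ((3 : ℝ) / 4) ≤ φ → φ ≤ 10 →
        |(∫ x in (ε ^ ((3 : ℝ) / 4))..φ,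
            1 / Real.sqrt (Real.sinh (x / 2) ^ 2 + ε ^ 2))
          - 4 * (arccoth (Real.exp (ε ^ ((3 : ℝ) / 4) / 2))
                  - arccoth (Real.exp (φ / 2)))|
          ≤ c * Real.sqrt ε := by
  refine ⟨2, by norm_num, ?_⟩
  intro ε hε hε2 φ haφ hφ10
  set a : ℝ := ε ^ ((3 : ℝ) / 4) with ha
  have ha0 : 0 < a := Real.rpow_pos_of_pos hε _
  -- FTC for g(x) = 1 / sinh(x/2)
  have hderiv : ∀ x ∈ Set.uIcc a φ,
      HasDerivAt (fun y => -4 * arccoth (Real.exp (y / 2))) (1 / Real.sinh (x / 2)) x := by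
    intro x hx
    rw [Set.uIcc_of_le haφ] at hx
    exact arccoth_deriv x (lt_of_lt_of_le ha0 hx.1)
  have hcontg : ContinuousOn (fun x => 1 / Real.sinh (x / 2)) (Set.uIcc a φ) := by
    apply ContinuousOn.div continuousOn_const
    · exact (Real.continuous_sinh.comp (continuous_id.div_const 2)).continuousOn
    · intro x hx
      rw [Set.uIcc_of_le haφ] at hx
      have hx0 : 0 < x := lt_of_lt_of_le ha0 hx.1
      exact ne_of_gt (Real.sinh_pos_iff.mpr (by linarith))
  have hintg : IntervalIntegrable (fun x => 1 / Real.sinh (x / 2))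
      MeasureTheory.volume a φ := hcontg.intervalIntegrable
  have hftc := intervalIntegral.integral_eq_sub_of_hasDerivAt hderiv hintg
  have hmain : 4 * (arccoth (Real.exp (a / 2)) - arccoth (Real.exp (φ / 2)))
      = ∫ x in a..φ, 1 / Real.sinh (x / 2) := by
    rw [hftc]; ring
  -- integrability of f
  have hcontf : Continuous (fun x => 1 / Real.sqrt (Real.sinh (x / 2) ^ 2 + ε ^ 2)) := by
    apply Continuous.div continuous_const
    · exact Real.continuous_sqrt.comp
        (((Real.continuous_sinh.comp (continuous_id.div_const 2)).pow 2).add continuous_const)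
    · intro x
      exact ne_of_gt (Real.sqrt_pos.mpr (by positivity))
  have hintf : IntervalIntegrable (fun x => 1 / Real.sqrt (Real.sinh (x / 2) ^ 2 + ε ^ 2))
      MeasureTheory.volume a φ := hcontf.intervalIntegrable a φ
  rw [hmain, ← intervalIntegral.integral_sub hintf hintg]
  -- majorant h(x) = 4 ε² x⁻³
  have hconth : ContinuousOn (fun x : ℝ => 4 * ε ^ 2 * x ^ (-3 : ℤ)) (Set.uIcc a φ) := by
    apply ContinuousOn.mul continuousOn_const
    apply ContinuousOn.zpow₀ continuousOn_id
    intro x hx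
    rw [Set.uIcc_of_le haφ] at hx
    exact Or.inl (ne_of_gt (lt_of_lt_of_le ha0 hx.1))
  have hinth : IntervalIntegrable (fun x : ℝ => 4 * ε ^ 2 * x ^ (-3 : ℤ))
      MeasureTheory.volume a φ := hconth.intervalIntegrable
  have hptwise : ∀ x ∈ Set.Icc a φ,
      |(fun x => 1 / Real.sqrt (Real.sinh (x / 2) ^ 2 + ε ^ 2)) x
        - (fun x => 1 / Real.sinh (x / 2)) x| ≤ 4 * ε ^ 2 * x ^ (-3 : ℤ) := by
    intro x hx
    have hx0 : 0 < x := lt_of_lt_of_le ha0 hx.1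
    have hs0 : 0 < Real.sinh (x / 2) := Real.sinh_pos_iff.mpr (by linarith)
    have hb := pointwise_bound (Real.sinh (x / 2)) ε hs0 hε.le
    have hsx : x / 2 ≤ Real.sinh (x / 2) := le_of_lt (Real.self_lt_sinh_iff.mpr (by linarith))
    have h2 : ε ^ 2 / (2 * Real.sinh (x / 2) ^ 3) ≤ 4 * ε ^ 2 * x ^ (-3 : ℤ) := by
      have hcube : (x / 2) ^ 3 ≤ Real.sinh (x / 2) ^ 3 := by
        exact pow_le_pow_left₀ (by positivity) hsx 3
      have h8 : x ^ 3 ≤ 8 * Real.sinh (x / 2) ^ 3 := by nlinarith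
      have hxk : (0:ℝ) < x ^ 3 := by positivity
      have hzp : (x:ℝ) ^ (-3 : ℤ) = (x ^ 3)⁻¹ := by
        simp [zpow_neg]
      rw [hzp, show 4 * ε ^ 2 * (x ^ 3)⁻¹ = 4 * ε ^ 2 / x ^ 3 by ring,
        div_le_div_iff₀ (by positivity) hxk]
      nlinarith [mul_le_mul_of_nonneg_left h8 (sq_nonneg ε)]
    calc _ ≤ ε ^ 2 / (2 * Real.sinh (x / 2) ^ 3) := hb
      _ ≤ _ := h2
  calc |∫ x in a..φ, (1 / Real.sqrt (Real.sinh (x / 2) ^ 2 + ε ^ 2) - 1 / Real.sinh (x / 2))|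
      ≤ ∫ x in a..φ, |1 / Real.sqrt (Real.sinh (x / 2) ^ 2 + ε ^ 2) - 1 / Real.sinh (x / 2)| :=
        intervalIntegral.abs_integral_le_integral_abs haφ
    _ ≤ ∫ x in a..φ, 4 * ε ^ 2 * x ^ (-3 : ℤ) := by
        apply intervalIntegral.integral_mono_on haφ ((hintf.sub hintg).abs) hinth
        exact hptwise
    _ = 4 * ε ^ 2 * ∫ x in a..φ, x ^ (-3 : ℤ) := by
        rw [intervalIntegral.integral_const_mul]
    _ = 4 * ε ^ 2 * ((φ ^ (-2 : ℤ) - a ^ (-2 : ℤ)) / ((-2 : ℤ) : ℝ)) := by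
        rw [integral_zpow]
        · norm_num
        · right
          constructor
          · norm_num
          · rw [Set.uIcc_of_le haφ]
            intro h0
            exact absurd h0.1 (not_le.mpr ha0)
    _ ≤ 2 * Real.sqrt ε := by
        have hφ0 : 0 < φ := lt_of_lt_of_le ha0 haφ
        have hφ2 : (0:ℝ) < φ ^ (-2 : ℤ) := by positivity
        have ha2 : a ^ (-2 : ℤ) = ε ^ (-(3:ℝ)/2) := by
          rw [ha, ← Real.rpow_intCast (ε ^ ((3:ℝ)/4)) (-2), ← Real.rpow_mul hε.le]
          norm_num
        have hsqrt : Real.sqrt ε = ε ^ ((1:ℝ)/2) := Real.sqrt_eq_rpow ε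
        have hkey : 4 * ε ^ 2 * ((φ ^ (-2 : ℤ) - a ^ (-2 : ℤ)) / ((-2 : ℤ) : ℝ))
            ≤ 2 * ε ^ 2 * a ^ (-2 : ℤ) := by
          have : ((-2 : ℤ) : ℝ) = -2 := by norm_num
          rw [this]
          have h1 : (φ ^ (-2 : ℤ) - a ^ (-2 : ℤ)) / (-2:ℝ)
              = (a ^ (-2 : ℤ) - φ ^ (-2 : ℤ)) / 2 := by ring
          rw [h1]
          nlinarith [hφ2, sq_nonneg ε, pow_pos hε 2]
        have heq : 2 * ε ^ 2 * a ^ (-2 : ℤ) = 2 * Real.sqrt ε := by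
          rw [ha2, hsqrt, show (ε:ℝ) ^ 2 = ε ^ ((2:ℝ)) by
            rw [← Real.rpow_natCast ε 2]; norm_num]
          rw [mul_assoc, ← Real.rpow_add hε]
          norm_num
        linarith
end

section
/- Let φ be as above and set ε = φ'(0)/(2√α) with φ'(0) > 0. Then for all ψ ∈ [0, V], x(ψ) = (1/(2√α))·∫₀^ψ dξ/√(sinh²(ξ/2) + ε²), and the boundary condition x(V) = L/2 is equivalent to √α·L = ∫₀^V dξ/√(sinh²(ξ/2) + ε²). -/
open Real Set

/-- With ε = φ'(0)/(2√α), the inverse function satisfies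
x(ψ) = (1/(2√α))·∫₀^ψ dξ/√(sinh²(ξ/2) + ε²), and x(V) = L/2 is
equivalent to √α·L = ∫₀^V dξ/√(sinh²(ξ/2) + ε²). -/
theorem stmt12 (L V α : ℝ) (hL : 0 < L) (hV : 0 < V) (hα : 0 < α) (φ : ℝ → ℝ)
    (hC2 : ContDiffOn ℝ 2 φ (Icc (-(L / 2)) (L / 2)))
    (hode : ∀ x ∈ Icc (-(L / 2)) (L / 2),
      deriv (deriv φ) x = α * Real.sinh (φ x))
    (hodd : ∀ x ∈ Icc (-(L / 2)) (L / 2), φ (-x) = -φ x)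
    (hbcL : φ (-(L / 2)) = -V) (hbcR : φ (L / 2) = V)
    (hmono : ∀ x ∈ Icc (-(L / 2)) (L / 2), 0 < deriv φ x)
    (hd0 : 0 < deriv φ 0)
    (ε : ℝ) (hεdef : ε = deriv φ 0 / (2 * Real.sqrt α)) :
    (∀ ψ ∈ Icc (0 : ℝ) V, ∀ x ∈ Icc (0 : ℝ) (L / 2), φ x = ψ →
      x = (1 / (2 * Real.sqrt α)) *
            ∫ ξ in (0 : ℝ)..ψ, 1 / Real.sqrt (Real.sinh (ξ / 2) ^ 2 + ε ^ 2)) ∧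
    ((L / 2 = (1 / (2 * Real.sqrt α)) *
          ∫ ξ in (0 : ℝ)..V, 1 / Real.sqrt (Real.sinh (ξ / 2) ^ 2 + ε ^ 2)) ↔
      Real.sqrt α * L
        = ∫ ξ in (0 : ℝ)..V, 1 / Real.sqrt (Real.sinh (ξ / 2) ^ 2 + ε ^ 2)) := by
  have hsqα : (0:ℝ) < Real.sqrt α := Real.sqrt_pos.mpr hα
  have hsqα' : Real.sqrt α ≠ 0 := ne_of_gt hsqα
  have hsq2 : Real.sqrt α ^ 2 = α := Real.sq_sqrt hα.le
  constructor
  · -- main formula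
    intro ψ hψ x hx hφx
    subst hφx
    set s : Set ℝ := Icc (-(L / 2)) (L / 2) with hs
    have hLs : -(L/2) < L/2 := by linarith
    have hsub : Icc (0:ℝ) (L/2) ⊆ s := Icc_subset_Icc (by linarith) le_rfl
    have hmem0 : (0:ℝ) ∈ s := ⟨by linarith, by linarith⟩
    have hφ0 : φ 0 = 0 := by
      have h := hodd 0 hmem0
      rw [neg_zero] at h; linarith
    have hεpos : 0 < ε := by rw [hεdef]; positivity
    have hSpos : ∀ ξ : ℝ, 0 < Real.sinh (ξ/2)^2 + ε^2 := fun ξ => by positivity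
    have hdiff : ∀ t ∈ s, HasDerivAt φ (deriv φ t) t := by
      intro t ht
      have hpos := hmono t ht
      by_cases hd : DifferentiableAt ℝ φ t
      · exact hd.hasDerivAt
      · rw [deriv_zero_of_not_differentiableAt hd] at hpos; linarith
    -- second derivative on the interior
    have hderiv2 : ∀ t ∈ Ioo (-(L/2)) (L/2),
        HasDerivAt (deriv φ) (α * Real.sinh (φ t)) t := by
      intro t ht
      have h1 : ContDiffOn ℝ 1 (deriv φ) (Ioo (-(L/2)) (L/2)) := by
        have := (hC2.mono Ioo_subset_Icc_self).deriv_of_isOpen isOpen_Ioo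
          (m := 1) (by norm_num)
        simpa using this
      have h2 : DifferentiableAt ℝ (deriv φ) t :=
        ((h1.differentiableOn one_ne_zero) t ht).differentiableAt
          (isOpen_Ioo.mem_nhds ht)
      have := h2.hasDerivAt
      rwa [hode t (Ioo_subset_Icc_self ht)] at this
    -- continuity of deriv φ on s
    have hUD : UniqueDiffOn ℝ s := uniqueDiffOn_Icc hLs
    have hcontd : ContinuousOn (deriv φ) s := by
      have h1 : ContinuousOn (derivWithin φ s) s :=
        hC2.continuousOn_derivWithin hUD (by norm_num)
      refine h1.congr fun t ht => ?_
      exact ((hdiff t ht).hasDerivWithinAt.derivWithin (hUD t ht)).symm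
    -- energy conservation on [0, L/2]
    have energy : ∀ t ∈ Icc (0:ℝ) (L/2),
        (deriv φ t)^2 - 2*α*Real.cosh (φ t)
          = (deriv φ 0)^2 - 2*α*Real.cosh (φ 0) := by
      have hcontE : ContinuousOn
          (fun t => (deriv φ t)^2 - 2*α*Real.cosh (φ t)) (Icc (0:ℝ) (L/2)) := by
        apply ContinuousOn.sub
        · exact ((hcontd.mono hsub).pow 2)
        · exact continuousOn_const.mul
            (Real.continuous_cosh.comp_continuousOn (hC2.continuousOn.mono hsub))
      have hEz : ∀ t ∈ Ico (0:ℝ) (L/2),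
          HasDerivWithinAt (fun t => (deriv φ t)^2 - 2*α*Real.cosh (φ t)) 0 (Ici t) t := by
        intro t ht
        have htIoo : t ∈ Ioo (-(L/2)) (L/2) := ⟨by linarith [ht.1], ht.2⟩
        have h1 := ((hderiv2 t htIoo).pow 2)
        have h2 := ((hdiff t (Ioo_subset_Icc_self htIoo)).cosh).const_mul (2*α)
        have h3 := h1.sub h2
        have : (2:ℕ) * deriv φ t ^ (2-1) * (α * Real.sinh (φ t))
            - 2*α * (Real.sinh (φ t) * deriv φ t) = 0 := by ring
        rw [this] at h3
        exact h3.hasDerivWithinAt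
      exact constant_of_has_deriv_right_zero hcontE hEz
    -- explicit formula for deriv φ
    have hkey : ∀ t ∈ Icc (0:ℝ) (L/2),
        deriv φ t = 2 * Real.sqrt α * Real.sqrt (Real.sinh (φ t / 2)^2 + ε^2) := by
      intro t ht
      have hE := energy t ht
      have hcosh : Real.cosh (φ t) = 2 * Real.sinh (φ t / 2)^2 + 1 := by
        have h1 := Real.cosh_two_mul (φ t / 2)
        have h2 : Real.cosh (φ t / 2)^2 = Real.sinh (φ t / 2)^2 + 1 := by
          rw [Real.cosh_sq]
        rw [show (2 : ℝ) * (φ t / 2) = φ t by ring, h2] at h1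
        linarith
      have hε2 : 4 * α * ε^2 = (deriv φ 0)^2 := by
        rw [hεdef]
        field_simp
        ring_nf
        rw [hsq2]
      have hsq : (deriv φ t)^2
          = (2 * Real.sqrt α * Real.sqrt (Real.sinh (φ t / 2)^2 + ε^2))^2 := by
        have hS := (hSpos (φ t)).le
        have : Real.sqrt (Real.sinh (φ t / 2)^2 + ε^2)^2
            = Real.sinh (φ t / 2)^2 + ε^2 := Real.sq_sqrt (by positivity)
        rw [mul_pow, mul_pow, this, hsq2, hφ0, Real.cosh_zero] at *
        nlinarith [hE, hcosh, hε2]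
      have hpos1 : 0 < deriv φ t := hmono t (hsub ht)
      have hpos2 : 0 < 2 * Real.sqrt α * Real.sqrt (Real.sinh (φ t / 2)^2 + ε^2) := by
        have := Real.sqrt_pos.mpr (hSpos (φ t))
        positivity
      nlinarith [hsq, hpos1, hpos2]
    -- change of variables
    set g : ℝ → ℝ := fun ξ => 1 / Real.sqrt (Real.sinh (ξ/2)^2 + ε^2) with hg
    have hgcont : Continuous g := by
      apply continuous_const.div
      · exact Real.continuous_sqrt.comp
          (((Real.continuous_sinh.comp (continuous_id.div_const 2)).pow 2).add
            continuous_const)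
      · intro ξ
        exact ne_of_gt (Real.sqrt_pos.mpr (hSpos ξ))
    have huIcc : uIcc (0:ℝ) x = Icc 0 x := uIcc_of_le hx.1
    have hxsub : Icc (0:ℝ) x ⊆ Icc (0:ℝ) (L/2) := Icc_subset_Icc le_rfl hx.2
    have hcov : (∫ t in (0:ℝ)..x, deriv φ t • (g ∘ φ) t) = ∫ u in (φ 0)..(φ x), g u := by
      apply intervalIntegral.integral_comp_smul_deriv
      · intro t ht
        rw [huIcc] at ht
        exact hdiff t (hsub (hxsub ht))
      · rw [huIcc]
        exact hcontd.mono (hxsub.trans hsub)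
      · exact hgcont
    have hconst : ∀ t ∈ uIcc (0:ℝ) x,
        deriv φ t • (g ∘ φ) t = 2 * Real.sqrt α := by
      intro t ht
      rw [huIcc] at ht
      have hk := hkey t (hxsub ht)
      have hSne : Real.sqrt (Real.sinh (φ t / 2)^2 + ε^2) ≠ 0 :=
        ne_of_gt (Real.sqrt_pos.mpr (hSpos (φ t)))
      simp only [Function.comp, hg, smul_eq_mul, hk]
      field_simp
    have hint : (∫ t in (0:ℝ)..x, deriv φ t • (g ∘ φ) t) = 2 * Real.sqrt α * x := by
      rw [intervalIntegral.integral_congr hconst]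
      simp [mul_comm]
      ring
    rw [hφ0, hint] at hcov
    rw [hg] at hcov
    have : (∫ ξ in (0:ℝ)..φ x, 1 / Real.sqrt (Real.sinh (ξ/2)^2 + ε^2))
        = 2 * Real.sqrt α * x := hcov.symm
    rw [this]
    field_simp
  · constructor <;> intro h
    · have h2 : 2 * Real.sqrt α * (L/2)
          = 2 * Real.sqrt α * ((1 / (2 * Real.sqrt α)) *
            ∫ ξ in (0:ℝ)..V, 1 / Real.sqrt (Real.sinh (ξ/2)^2 + ε^2)) := by rw [← h]
      rw [← mul_assoc] at h2
      field_simp at h2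
      linarith
    · rw [← h]
      field_simp
end
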